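/- Let $(X, \Sigma, \mu)$ be a measure space and $\mathcal{F} \subseteq \mathcal{P}(X)$. There exists a measure space $(X, \Sigma', \mu')$ with $\Sigma \subseteq \Sigma'$, $\mu'$ extending $\mu$, and every member of $\mathcal{F}$ a $\mu'$-null set, if and only if: whenever $E \in \Sigma$ is covered by a countable union of members of $\mathcal{F}$, then $\mu(E) = 0$. -/

import Mathlib

open MeasureTheory

theorem stmt4 {X : Type*} [m : MeasurableSpace X] (μ : Measure X) (F : Set (Set X)) :
    (∃ (m' : MeasurableSpace X) (μ' : @Measure X m'),
      (∀ s : Set X, MeasurableSet[m] s → MeasurableSet[m'] s) ∧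
      (∀ s : Set X, MeasurableSet[m] s → μ' s = μ s) ∧
      (∀ N ∈ F, MeasurableSet[m'] N ∧ μ' N = 0)) ↔
    (∀ E : Set X, MeasurableSet[m] E →
      ∀ f : ℕ → Set X, (∀ n, f n ∈ F) → E ⊆ ⋃ n, f n → μ E = 0) := by
  classical
  constructor
  · rintro ⟨m', μ', hmono, heq, hnull⟩ E hE f hf hEf
    have h0 : μ' E = 0 := by
      have : μ' (⋃ n, f n) = 0 := measure_iUnion_null fun n => (hnull (f n) (hf n)).2
      exact measure_mono_null hEf this
    rw [← heq E hE, h0]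
  · intro h
    -- F' : F together with the empty set
    set F' : Set (Set X) := insert (∅ : Set X) F with hF'def
    -- key: a measurable set covered by countably many members of F' is μ-null
    have key : ∀ (f : ℕ → Set X), (∀ n, f n ∈ F') → ∀ G : Set X, MeasurableSet[m] G →
        G ⊆ ⋃ n, f n → μ G = 0 := by
      intro f hf G hG hsub
      by_cases hex : ∃ n, f n ∈ F
      · obtain ⟨n₀, hn₀⟩ := hex
        set g : ℕ → Set X := fun n => if f n ∈ F then f n else f n₀ with hg_def
        have hg : ∀ n, g n ∈ F := by
          intro n
          by_cases hn : f n ∈ F <;> simp [hg_def, hn, hn₀]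
        refine h G hG g hg (hsub.trans (Set.iUnion_mono fun n => ?_))
        by_cases hn : f n ∈ F
        · simp [hg_def, hn]
        · have hfe : f n = ∅ := ((hf n).resolve_right hn)
          simp [hfe]
      · push_neg at hex
        have hall : ∀ n, f n = ∅ := fun n => (hf n).resolve_right (hex n)
        have hGempty : G ⊆ (∅ : Set X) := hsub.trans (by simp [hall])
        exact measure_mono_null hGempty measure_empty
    -- the gauge function : 0 on members of F', μ otherwise
    set ρ : Set X → ENNReal := fun A => if A ∈ F' then 0 else μ A with hρ_def
    have hρ_empty : ρ ∅ = 0 := by simp [hρ_def, hF'def]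
    have hρ_le : ∀ A, ρ A ≤ μ A := by
      intro A
      by_cases hA : A ∈ F' <;> simp [hρ_def, hA]
    set ν : OuterMeasure X := OuterMeasure.ofFunction ρ hρ_empty with hν_def
    -- ν vanishes on F'
    have hν_null : ∀ N ∈ F', ν N = 0 := by
      intro N hN
      refine le_antisymm ?_ zero_le
      calc ν N ≤ ρ N := OuterMeasure.ofFunction_le N
        _ = 0 := by simp [hρ_def, hN]
    -- ν A ≤ μ A for all A
    have hν_le : ∀ A, ν A ≤ μ A := fun A => (OuterMeasure.ofFunction_le A).trans (hρ_le A)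
    -- μ E ≤ ν E for measurable E
    have hν_ge : ∀ E : Set X, MeasurableSet[m] E → μ E ≤ ν E := by
      intro E hE
      rw [hν_def, OuterMeasure.ofFunction_apply]
      refine le_iInf fun B => le_iInf fun hB => ?_
      -- split B into F'-part and the rest
      set S : Set X := ⋃ i, (if B i ∈ F' then (∅ : Set X) else B i) with hS_def
      set T : ℕ → Set X := fun i => if B i ∈ F' then B i else (∅ : Set X) with hT_def
      have hT : ∀ i, T i ∈ F' := by
        intro i
        by_cases hi : B i ∈ F'
        · simpa only [hT_def, if_pos hi] using hi
        · simp only [hT_def, if_neg hi]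
          exact Set.mem_insert _ _
      set G : Set X := toMeasurable μ (E ∩ S) with hG_def
      have hEG : E \ G ⊆ ⋃ i, T i := by
        intro x hx
        have hxE : x ∈ E := hx.1
        have hxS : x ∉ S := fun hxS => hx.2 (subset_toMeasurable μ (E ∩ S) ⟨hxE, hxS⟩)
        obtain ⟨i, hi⟩ := Set.mem_iUnion.1 (hB hxE)
        by_cases hBi : B i ∈ F'
        · exact Set.mem_iUnion.2 ⟨i, by simp [hT_def, hBi, hi]⟩
        · exact absurd (Set.mem_iUnion.2 ⟨i, by simp [hS_def, hBi, hi]⟩) hxS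
      have hEG0 : μ (E \ G) = 0 :=
        key T hT (E \ G) (hE.diff (measurableSet_toMeasurable μ _)) hEG
      calc μ E ≤ μ (G ∪ (E \ G)) := measure_mono (fun x hx => by
            by_cases hxG : x ∈ G
            · exact Or.inl hxG
            · exact Or.inr ⟨hx, hxG⟩)
        _ ≤ μ G + μ (E \ G) := measure_union_le _ _
        _ = μ (E ∩ S) := by rw [hEG0, add_zero, hG_def, measure_toMeasurable]
        _ ≤ μ S := measure_mono Set.inter_subset_right
        _ ≤ ∑' i, μ (if B i ∈ F' then (∅ : Set X) else B i) := measure_iUnion_le _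
        _ ≤ ∑' i, ρ (B i) := by
            refine ENNReal.tsum_le_tsum fun i => ?_
            by_cases hBi : B i ∈ F' <;> simp [hρ_def, hBi]
    -- measurable sets are Carathéodory-measurable for ν
    have hcar : ∀ E : Set X, MeasurableSet[m] E → MeasurableSet[ν.caratheodory] E := by
      intro E hE
      rw [OuterMeasure.isCaratheodory_iff_le]
      intro A
      rw [hν_def, OuterMeasure.ofFunction_apply]
      refine le_iInf fun B => le_iInf fun hB => ?_
      set C : ℕ → Set X := fun i => if B i ∈ F' then B i else B i ∩ E with hC_def
      set D : ℕ → Set X := fun i => if B i ∈ F' then B i else B i \ E with hD_def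
      have hAC : A ∩ E ⊆ ⋃ i, C i := by
        intro x hx
        obtain ⟨i, hi⟩ := Set.mem_iUnion.1 (hB hx.1)
        refine Set.mem_iUnion.2 ⟨i, ?_⟩
        by_cases hBi : B i ∈ F' <;> simp [hC_def, hBi, hi, hx.2]
      have hAD : A \ E ⊆ ⋃ i, D i := by
        intro x hx
        obtain ⟨i, hi⟩ := Set.mem_iUnion.1 (hB hx.1)
        refine Set.mem_iUnion.2 ⟨i, ?_⟩
        by_cases hBi : B i ∈ F' <;> simp [hD_def, hBi, hi, hx.2]
      have h1 : ν (A ∩ E) ≤ ∑' i, ρ (C i) := by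
        rw [hν_def, OuterMeasure.ofFunction_apply]
        exact iInf₂_le C hAC
      have h2 : ν (A \ E) ≤ ∑' i, ρ (D i) := by
        rw [hν_def, OuterMeasure.ofFunction_apply]
        exact iInf₂_le D hAD
      calc ν (A ∩ E) + ν (A \ E) ≤ (∑' i, ρ (C i)) + ∑' i, ρ (D i) :=
            add_le_add h1 h2
        _ = ∑' i, (ρ (C i) + ρ (D i)) := (ENNReal.tsum_add).symm
        _ ≤ ∑' i, ρ (B i) := by
            refine ENNReal.tsum_le_tsum fun i => ?_
            by_cases hBi : B i ∈ F'
            · simp [hC_def, hD_def, hρ_def, hBi]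
            · have hCle : ρ (C i) ≤ μ (B i ∩ E) := by
                simpa [hC_def, hBi] using hρ_le (B i ∩ E)
              have hDle : ρ (D i) ≤ μ (B i \ E) := by
                simpa [hD_def, hBi] using hρ_le (B i \ E)
              calc ρ (C i) + ρ (D i) ≤ μ (B i ∩ E) + μ (B i \ E) := add_le_add hCle hDle
                _ = μ (B i) := measure_inter_add_diff _ hE
                _ = ρ (B i) := by simp [hρ_def, hBi]
    -- F'-members are Carathéodory-measurable (they are ν-null)
    have hcarF : ∀ N ∈ F', MeasurableSet[ν.caratheodory] N := by
      intro N hN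
      rw [OuterMeasure.isCaratheodory_iff_le]
      intro A
      have h1 : ν (A ∩ N) = 0 :=
        le_antisymm ((measure_mono Set.inter_subset_right).trans (hν_null N hN).le) zero_le
      calc ν (A ∩ N) + ν (A \ N) = ν (A \ N) := by rw [h1, zero_add]
        _ ≤ ν A := measure_mono Set.diff_subset
    refine ⟨ν.caratheodory, @OuterMeasure.toMeasure X ν.caratheodory ν le_rfl, fun s hs => hcar s hs, fun s hs => ?_,
      fun N hN => ⟨hcarF N (Set.mem_insert_of_mem _ hN), ?_⟩⟩
    · rw [@toMeasure_apply X ν.caratheodory ν le_rfl s (hcar s hs)]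
      exact le_antisymm (hν_le s) (hν_ge s hs)
    · rw [@toMeasure_apply X ν.caratheodory ν le_rfl N (hcarF N (Set.mem_insert_of_mem _ hN))]
      exact hν_null N (Set.mem_insert_of_mem _ hN)
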